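/- Let λ ≥ 1. If a basis is C_ℓ-suppression quasi-greedy and C_{λ,rp}-(λ, RPGII), then it is C_ℓC_{λ,rp}-(λ, RPSLC). -/

import Mathlib

open Finset Filter

noncomputable section

variable {X : Type*} [NormedAddCommGroup X] [NormedSpace ℝ X]

/-- Projection `P_A x = ∑_{n ∈ A} e_n^*(x) e_n`. -/
def proj (f : ℕ → X →L[ℝ] ℝ) (e : ℕ → X) (A : Finset ℕ) (x : X) : X :=
  ∑ n ∈ A, f n x • e n

/-- `Λ` is a greedy set of `x`. -/
def GreedySet (f : ℕ → X →L[ℝ] ℝ) (x : X) (Λ : Finset ℕ) : Prop :=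
  ∀ n ∈ Λ, ∀ m, m ∉ Λ → |f m x| ≤ |f n x|

/-- A (biorthogonal, norm-bounded, fundamental) basis system. -/
structure BasisSystem (f : ℕ → X →L[ℝ] ℝ) (e : ℕ → X) : Prop where
  biorth : ∀ n m, f n (e m) = if n = m then (1 : ℝ) else 0
  dense : Dense (Submodule.span ℝ (Set.range e) : Set X)
  bounded : ∃ c₁ c₂ : ℝ, 0 < c₁ ∧ ∀ n, c₁ ≤ ‖e n‖ ∧ ‖e n‖ ≤ c₂ ∧ ‖f n‖ ≤ c₂

/-- `σ̌^Λ_m(x)`: inf of `‖x - P_I x‖` over `I = ∅` or intervals `I` with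
`Λ ≤ max I` and `|I| ≤ m`. -/
def checkSigma (f : ℕ → X →L[ℝ] ℝ) (e : ℕ → X) (Λ : Finset ℕ) (m : ℕ) (x : X) : ℝ :=
  sInf {r : ℝ | ∃ I : Finset ℕ,
    (I = ∅ ∨ ∃ a b : ℕ, a ≤ b ∧ I = Finset.Icc a b ∧ ∀ n ∈ Λ, n ≤ b) ∧
    I.card ≤ m ∧ r = ‖x - proj f e I x‖}

/-- `σ̂^Λ_m(x)`: inf of `‖x - P_I x‖` over `I = ∅` or intervals `I` with
`min I ≤ Λ` and `|I| ≤ m`. -/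
def hatSigma (f : ℕ → X →L[ℝ] ℝ) (e : ℕ → X) (Λ : Finset ℕ) (m : ℕ) (x : X) : ℝ :=
  sInf {r : ℝ | ∃ I : Finset ℕ,
    (I = ∅ ∨ ∃ a b : ℕ, a ≤ b ∧ I = Finset.Icc a b ∧ ∀ n ∈ Λ, a ≤ n) ∧
    I.card ≤ m ∧ r = ‖x - proj f e I x‖}

/-- `σ̃^{R,Λ}_m(x)`: inf of `‖x - P_A x‖` over `|A| ≤ m`, `A > Λ`. -/
def revSigma (f : ℕ → X →L[ℝ] ℝ) (e : ℕ → X) (Λ : Finset ℕ) (m : ℕ) (x : X) : ℝ :=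
  sInf {r : ℝ | ∃ A : Finset ℕ, A.card ≤ m ∧ (∀ n ∈ Λ, ∀ a ∈ A, n < a) ∧
    r = ‖x - proj f e A x‖}

/-- Reverse partially greedy with constant `C`. -/
def RPG (f : ℕ → X →L[ℝ] ℝ) (e : ℕ → X) (C : ℝ) : Prop :=
  ∀ (x : X) (m : ℕ) (Λ : Finset ℕ), Λ.card = m → GreedySet f x Λ →
    ‖x - proj f e Λ x‖ ≤ C * revSigma f e Λ m x

/-- `(λ, RPGII)` with constant `C`. -/
def RPGII (f : ℕ → X →L[ℝ] ℝ) (e : ℕ → X) (l C : ℝ) : Prop :=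
  ∀ (x : X) (m : ℕ) (Λ : Finset ℕ), Λ.card = ⌈l * (m : ℝ)⌉₊ → GreedySet f x Λ →
    ‖x - proj f e Λ x‖ ≤ C * checkSigma f e Λ m x

/-- Quasi-greedy with constant `C`. -/
def QG (f : ℕ → X →L[ℝ] ℝ) (e : ℕ → X) (C : ℝ) : Prop :=
  ∀ (x : X) (Λ : Finset ℕ), GreedySet f x Λ → ‖proj f e Λ x‖ ≤ C * ‖x‖

/-- Suppression quasi-greedy with constant `C`. -/
def SuppQG (f : ℕ → X →L[ℝ] ℝ) (e : ℕ → X) (C : ℝ) : Prop :=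
  ∀ (x : X) (Λ : Finset ℕ), GreedySet f x Λ → ‖x - proj f e Λ x‖ ≤ C * ‖x‖

/-- Reverse conservative with constant `C`. -/
def RevConservative (e : ℕ → X) (C : ℝ) : Prop :=
  ∀ A B : Finset ℕ, (∀ b ∈ B, ∀ a ∈ A, b < a) → A.card ≤ B.card →
    ‖∑ n ∈ A, e n‖ ≤ C * ‖∑ n ∈ B, e n‖

/-- `s(A) = max A - min A + 1` (and `s(∅) = 0`). -/
def spread (A : Finset ℕ) : ℕ :=
  if h : A.Nonempty then A.max' h - A.min' h + 1 else 0

/-- `(λ, reverse conservative of type II)` with constant `C`. -/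
def RevConsII (e : ℕ → X) (l C : ℝ) : Prop :=
  ∀ A B : Finset ℕ, (l - 1) * spread A + (A.card : ℝ) ≤ (B.card : ℝ) →
    (∀ b ∈ B, ∀ a ∈ A, b < a) → ‖∑ n ∈ A, e n‖ ≤ C * ‖∑ n ∈ B, e n‖

/-- `x` surrounds `A`: `supp x ∩ [min A, max A] = ∅` (vacuous for `A = ∅`). -/
def Surrounds (f : ℕ → X →L[ℝ] ℝ) (x : X) (A : Finset ℕ) : Prop :=
  ∀ a ∈ A, ∀ b ∈ A, ∀ n, a ≤ n → n ≤ b → f n x = 0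

/-- `(λ, RPSLC)` with constant `Δ`. -/
def RPSLC (f : ℕ → X →L[ℝ] ℝ) (e : ℕ → X) (l Δ : ℝ) : Prop :=
  ∀ x : X, (∀ n, |f n x| ≤ 1) →
    ∀ ε δ : ℕ → ℝ, (∀ n, |ε n| = 1) → (∀ n, |δ n| = 1) →
    ∀ A B : Finset ℕ, (l - 1) * spread A + (A.card : ℝ) ≤ (B.card : ℝ) →
    (∀ n ∈ B, f n x = 0) → (∀ b ∈ B, ∀ a ∈ A, b < a) → Surrounds f x A →
    ‖x + ∑ n ∈ A, ε n • e n‖ ≤ Δ * ‖x + ∑ n ∈ B, δ n • e n‖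


lemma coeff_sum_aux (f : ℕ → X →L[ℝ] ℝ) (e : ℕ → X) (hb : BasisSystem f e)
    (c : ℕ → ℝ) (S : Finset ℕ) (m : ℕ) :
    f m (∑ n ∈ S, c n • e n) = if m ∈ S then c m else 0 := by
  rw [map_sum]
  simp only [map_smul, smul_eq_mul, hb.biorth, mul_ite, mul_one, mul_zero]
  exact Finset.sum_ite_eq S m c

lemma coeff_key (f : ℕ → X →L[ℝ] ℝ) (e : ℕ → X) (hb : BasisSystem f e)
    (x : X) (ε c : ℕ → ℝ) (A S : Finset ℕ) (m : ℕ) :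
    f m (x + ∑ n ∈ A, ε n • e n + ∑ n ∈ S, c n • e n)
      = f m x + (if m ∈ A then ε m else 0) + (if m ∈ S then c m else 0) := by
  rw [map_add, map_add, coeff_sum_aux f e hb, coeff_sum_aux f e hb]

lemma RPGII_one_le (f : ℕ → X →L[ℝ] ℝ) (e : ℕ → X) (hb : BasisSystem f e)
    {l C : ℝ} (h : RPGII f e l C) : 1 ≤ C := by
  obtain ⟨c₁, c₂, hc₁, hc⟩ := hb.bounded
  have he0 : (0:ℝ) < ‖e 0‖ := lt_of_lt_of_le hc₁ (hc 0).1
  have hg : GreedySet f (e 0) (∅ : Finset ℕ) := by intro n hn; simp at hn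
  have hs1 := h (e 0) 0 ∅ (by simp) hg
  have hset : {r : ℝ | ∃ I : Finset ℕ,
      (I = ∅ ∨ ∃ a b : ℕ, a ≤ b ∧ I = Finset.Icc a b ∧ ∀ n ∈ (∅ : Finset ℕ), n ≤ b) ∧
      I.card ≤ 0 ∧ r = ‖e 0 - proj f e I (e 0)‖} = {‖e 0‖} := by
    ext r
    simp only [Set.mem_setOf_eq, Set.mem_singleton_iff]
    constructor
    · rintro ⟨I, -, hcard, rfl⟩
      have hIe : I = ∅ := Finset.card_eq_zero.mp (Nat.le_zero.mp hcard)
      subst hIe; simp [proj]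
    · rintro rfl
      exact ⟨∅, Or.inl rfl, by simp, by simp [proj]⟩
  have hsig : checkSigma f e ∅ 0 (e 0) = ‖e 0‖ := by
    rw [checkSigma, hset, csInf_singleton]
  rw [hsig] at hs1
  have : ‖e 0 - proj f e ∅ (e 0)‖ = ‖e 0‖ := by simp [proj]
  rw [this] at hs1
  nlinarith

/-- suppression quasi-greedy + `C`-(λ, RPGII) implies
`C_ℓ C`-(λ, RPSLC). -/
theorem stmt_7 [CompleteSpace X] (f : ℕ → X →L[ℝ] ℝ) (e : ℕ → X)
    (hb : BasisSystem f e) (l Cl C : ℝ) (hl : 1 ≤ l) (hs : SuppQG f e Cl)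
    (h : RPGII f e l C) : RPSLC f e l (Cl * C) := by
  have hC : 1 ≤ C := RPGII_one_le f e hb h
  have hCl : 1 ≤ Cl := by
    obtain ⟨c₁, c₂, hc₁, hc⟩ := hb.bounded
    have he0 : (0:ℝ) < ‖e 0‖ := lt_of_lt_of_le hc₁ (hc 0).1
    have hs1 := hs (e 0) ∅ (by intro n hn; simp at hn)
    have he : ‖e 0 - proj f e ∅ (e 0)‖ = ‖e 0‖ := by simp [proj]
    rw [he] at hs1
    nlinarith
  intro x hx ε δ hε hδ A B hcard hBx hBA hsur
  rcases A.eq_empty_or_nonempty with hA | hA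
  · -- A = ∅
    subst hA
    have hfy : ∀ m, f m (x + ∑ n ∈ B, δ n • e n)
        = f m x + (if m ∈ B then δ m else 0) := by
      intro m; rw [map_add, coeff_sum_aux f e hb]
    have hgB : GreedySet f (x + ∑ n ∈ B, δ n • e n) B := by
      intro n hn m hm
      rw [hfy n, hfy m, hBx n hn, if_pos hn, if_neg hm, zero_add, add_zero, hδ n]
      exact hx m
    have h1 := hs (x + ∑ n ∈ B, δ n • e n) B hgB
    have hproj : proj f e B (x + ∑ n ∈ B, δ n • e n) = ∑ n ∈ B, δ n • e n := by
      apply Finset.sum_congr rfl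
      intro n hn
      rw [hfy n, hBx n hn, if_pos hn, zero_add]
    rw [hproj, add_sub_cancel_right] at h1
    simp only [Finset.sum_empty, add_zero]
    have hy0 : (0:ℝ) ≤ ‖x + ∑ n ∈ B, δ n • e n‖ := norm_nonneg _
    calc ‖x‖ ≤ Cl * ‖x + ∑ n ∈ B, δ n • e n‖ := h1
      _ ≤ Cl * C * ‖x + ∑ n ∈ B, δ n • e n‖ := by
          nlinarith [mul_nonneg (by linarith : (0:ℝ) ≤ Cl) hy0]
  · -- A nonempty
    set a := A.min' hA with ha
    set b := A.max' hA with hbdef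
    have hab : a ≤ b := A.min'_le b (A.max'_mem hA)
    set I := Finset.Icc a b with hI
    have hAI : A ⊆ I := fun n hn => Finset.mem_Icc.mpr ⟨A.min'_le n hn, A.le_max' n hn⟩
    have hxI : ∀ n ∈ I, f n x = 0 := by
      intro n hn
      rw [hI, Finset.mem_Icc] at hn
      exact hsur a (A.min'_mem hA) b (A.max'_mem hA) n hn.1 hn.2
    have hBlt : ∀ n ∈ B, n < a := fun n hn => hBA n hn a (A.min'_mem hA)
    have hBI : ∀ n ∈ B, n ∉ I := by
      intro n hn hnI
      rw [hI, Finset.mem_Icc] at hnI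
      exact absurd hnI.1 (Nat.not_le.mpr (hBlt n hn))
    set G := I \ A with hG
    set D := B ∪ G with hD
    set c : ℕ → ℝ := fun n => if n ∈ B then δ n else 1 with hc
    have hcabs : ∀ n, |c n| = 1 := by
      intro n; rw [hc]; by_cases hn : n ∈ B <;> simp [hn, hδ n]
    set y := x + (∑ n ∈ A, ε n • e n) + ∑ n ∈ D, c n • e n with hy
    have hfy : ∀ m, f m y = f m x + (if m ∈ A then ε m else 0) + (if m ∈ D then c m else 0) :=
      fun m => coeff_key f e hb x ε c A D m
    have hDA : ∀ n ∈ D, n ∉ A := by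
      intro n hn
      rcases Finset.mem_union.mp hn with hn' | hn'
      · intro hnA; exact absurd (hBA n hn' n hnA) (lt_irrefl n)
      · exact (Finset.mem_sdiff.mp hn').2
    have hDx : ∀ n ∈ D, f n x = 0 := by
      intro n hn
      rcases Finset.mem_union.mp hn with hn' | hn'
      · exact hBx n hn'
      · exact hxI n (Finset.mem_sdiff.mp hn').1
    have hfyD : ∀ n ∈ D, f n y = c n := by
      intro n hn
      rw [hfy n, hDx n hn, if_neg (hDA n hn), if_pos hn]; ring
    have hfy1 : ∀ m, |f m y| ≤ 1 := by
      intro m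
      by_cases hm : m ∈ D
      · exact le_of_eq (by rw [hfyD m hm, hcabs m])
      · rw [hfy m, if_neg hm, add_zero]
        by_cases hmA : m ∈ A
        · rw [hxI m (hAI hmA), if_pos hmA, zero_add]
          exact le_of_eq (hε m)
        · rw [if_neg hmA, add_zero]; exact hx m
    -- cardinality facts
    have hIcard : I.card = b - a + 1 := by rw [hI, Nat.card_Icc]; omega
    have hspread : spread A = b - a + 1 := by rw [spread, dif_pos hA]
    have hAle : A.card ≤ I.card := Finset.card_le_card hAI
    have hGcard : G.card = I.card - A.card := by rw [hG]; exact Finset.card_sdiff_of_subset hAI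
    have hBG : Disjoint B G := by
      rw [Finset.disjoint_left]
      intro n hn hnG
      exact hBI n hn (Finset.mem_sdiff.mp hnG).1
    have hDcard : D.card = B.card + G.card := by
      rw [hD]; exact Finset.card_union_of_disjoint hBG
    set s := spread A with hsdef
    have htD : ⌈l * (s:ℝ)⌉₊ ≤ D.card := by
      apply Nat.ceil_le.mpr
      have h1 : (G.card : ℝ) = (I.card : ℝ) - (A.card : ℝ) := by
        rw [hGcard, Nat.cast_sub hAle]
      have h2 : (s : ℝ) = (I.card : ℝ) := by rw [hspread, hIcard]
      have h3 : (D.card : ℝ) = (B.card : ℝ) + (G.card : ℝ) := by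
        rw [hDcard, Nat.cast_add]
      linarith
    obtain ⟨Λ, hΛD, hΛcard⟩ := Finset.exists_subset_card_eq htD
    have hgΛ : GreedySet f y Λ := by
      intro n hn m hm
      rw [show |f n y| = 1 from by rw [hfyD n (hΛD hn), hcabs n]]
      exact hfy1 m
    have hrpg := h y s Λ hΛcard hgΛ
    have hprojΛ : proj f e Λ y = ∑ n ∈ Λ, c n • e n :=
      Finset.sum_congr rfl (fun n hn => by rw [hfyD n (hΛD hn)])
    set w := y - proj f e Λ y with hw
    have hwEq : w = x + (∑ n ∈ A, ε n • e n) + ∑ n ∈ D \ Λ, c n • e n := by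
      rw [hw, hprojΛ, hy, ← Finset.sum_sdiff hΛD (f := fun n => c n • e n)]
      abel
    have hfw : ∀ m, f m w
        = f m x + (if m ∈ A then ε m else 0) + (if m ∈ D \ Λ then c m else 0) := by
      intro m; rw [hwEq]; exact coeff_key f e hb x ε c A (D \ Λ) m
    have hfwD : ∀ n ∈ D \ Λ, f n w = c n := by
      intro n hn
      have hnD := (Finset.mem_sdiff.mp hn).1
      rw [hfw n, hDx n hnD, if_neg (hDA n hnD), if_pos hn]; ring
    have hfw1 : ∀ m, |f m w| ≤ 1 := by
      intro m
      by_cases hm : m ∈ D \ Λ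
      · exact le_of_eq (by rw [hfwD m hm, hcabs m])
      · rw [hfw m, if_neg hm, add_zero]
        by_cases hmA : m ∈ A
        · rw [hxI m (hAI hmA), if_pos hmA, zero_add]
          exact le_of_eq (hε m)
        · rw [if_neg hmA, add_zero]
          by_cases hmΛ : m ∈ Λ
          · rw [hDx m (hΛD hmΛ)]; simp
          · exact hx m
    have hgΓ : GreedySet f w (D \ Λ) := by
      intro n hn m hm
      rw [show |f n w| = 1 from by rw [hfwD n hn, hcabs n]]
      exact hfw1 m
    have hsup := hs w (D \ Λ) hgΓ
    have hprojΓ : proj f e (D \ Λ) w = ∑ n ∈ D \ Λ, c n • e n :=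
      Finset.sum_congr rfl (fun n hn => by rw [hfwD n hn])
    have hfinal : w - proj f e (D \ Λ) w = x + ∑ n ∈ A, ε n • e n := by
      rw [hprojΓ, hwEq]; abel
    rw [hfinal] at hsup
    -- checkSigma bound via the interval I
    have hIy : y - proj f e I y = x + ∑ n ∈ B, δ n • e n := by
      have hsplit : I = A ∪ G := by
        rw [hG, Finset.union_sdiff_of_subset hAI]
      have hd : Disjoint A G := by rw [hG]; exact Finset.disjoint_sdiff
      have hproj : proj f e I y = (∑ n ∈ A, ε n • e n) + ∑ n ∈ G, c n • e n := by
        rw [proj, hsplit, Finset.sum_union hd]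
        congr 1
        · apply Finset.sum_congr rfl
          intro n hn
          have hnD : n ∉ D := fun hnD => hDA n hnD hn
          rw [hfy n, hxI n (hAI hn), if_pos hn, if_neg hnD, zero_add, add_zero]
        · apply Finset.sum_congr rfl
          intro n hn
          rw [hfyD n (Finset.mem_union_right B hn)]
      have hDsplit : ∑ n ∈ D, c n • e n = (∑ n ∈ B, c n • e n) + ∑ n ∈ G, c n • e n := by
        rw [hD, Finset.sum_union hBG]
      have hBc : ∑ n ∈ B, c n • e n = ∑ n ∈ B, δ n • e n :=
        Finset.sum_congr rfl (fun n hn => by rw [hc]; simp [hn])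
      rw [hproj, hy, hDsplit, hBc]
      abel
    have hσ : checkSigma f e Λ s y ≤ ‖x + ∑ n ∈ B, δ n • e n‖ := by
      rw [← hIy, checkSigma]
      apply csInf_le
      · refine ⟨0, ?_⟩
        rintro r ⟨J, -, -, rfl⟩
        exact norm_nonneg _
      · refine ⟨I, Or.inr ⟨a, b, hab, hI, ?_⟩, ?_, rfl⟩
        · intro n hn
          rcases Finset.mem_union.mp (hΛD hn) with h1 | h1
          · exact le_of_lt (lt_of_lt_of_le (hBlt n h1) hab)
          · exact (Finset.mem_Icc.mp ((Finset.mem_sdiff.mp h1).1)).2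
        · rw [hIcard]; exact hspread.ge
    have hnn : (0:ℝ) ≤ ‖x + ∑ n ∈ B, δ n • e n‖ := norm_nonneg _
    calc ‖x + ∑ n ∈ A, ε n • e n‖ ≤ Cl * ‖w‖ := hsup
      _ ≤ Cl * (C * checkSigma f e Λ s y) :=
          mul_le_mul_of_nonneg_left hrpg (by linarith)
      _ ≤ Cl * (C * ‖x + ∑ n ∈ B, δ n • e n‖) :=
          mul_le_mul_of_nonneg_left (mul_le_mul_of_nonneg_left hσ (by linarith)) (by linarith)
      _ = Cl * C * ‖x + ∑ n ∈ B, δ n • e n‖ := by ring
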